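/- Suppose a is eventually periodic with some period ℓ ≥ 1 and pre-period k, i.e., a(j+ℓ) = a(j) for all j > k (equivalently, a is the sequence of partial quotients of a quadratic irrational). Then the generating functions F(z) = ∑_{n≥0} p(n)·zⁿ and G(z) = ∑_{n≥0} q(n)·zⁿ, viewed as formal power series in ℤ[[z]], are rational functions with integer coefficients: there exist polynomials u, v ∈ ℤ[z] with v having constant coefficient 1 such that v·F = u in ℤ[[z]], and there exist polynomials u', v' ∈ ℤ[z] with v' having constant coefficient 1 such that v'·G = u' in ℤ[[z]]. -/

import Mathlib

abbrev M2 := Matrix (Fin 2) (Fin 2) ℤ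

def Pprod (A : ℕ → M2) (n : ℕ) : ℕ → M2
  | 0 => 1
  | j + 1 => A (n + j + 1) * Pprod A n j

lemma ch2 (M : M2) : M * M = M.trace • M - M.det • (1 : M2) := by
  ext i j
  simp only [Matrix.mul_apply, Fin.sum_univ_two, Matrix.trace_fin_two, Matrix.det_fin_two,
    Matrix.sub_apply, Matrix.smul_apply, smul_eq_mul, Matrix.one_apply]
  fin_cases i <;> fin_cases j <;> simp <;> ring

lemma Pprod_comm (A : ℕ → M2) (n j : ℕ) :
    Pprod A (n + 1) j * A (n + 1) = A (n + 1 + j) * Pprod A n j := by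
  induction j with
  | zero => simp [Pprod]
  | succ j ih =>
      have h1 : n + 1 + j + 1 = n + 1 + (j + 1) := by ring
      have h2 : n + 1 + j = n + j + 1 := by ring
      rw [Pprod, Pprod, mul_assoc, ih, h1, ← mul_assoc, ← mul_assoc, h2]

lemma Pprod_per (A : ℕ → M2) (k ℓ : ℕ) (hA : ∀ i, k < i → A (i + ℓ) = A i)
    (n : ℕ) (hn : k ≤ n) (j : ℕ) : Pprod A (n + ℓ) j = Pprod A n j := by
  induction j with
  | zero => rfl
  | succ j ih =>
      rw [Pprod, Pprod, ih]
      congr 1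
      have : n + ℓ + j + 1 = (n + j + 1) + ℓ := by ring
      rw [this, hA _ (by omega)]

lemma Pprod_det (A : ℕ → M2) (hA : ∀ i, (A i).det = -1) (n j : ℕ) :
    (Pprod A n j).det = (-1) ^ j := by
  induction j with
  | zero => simp [Pprod]
  | succ j ih => rw [Pprod, Matrix.det_mul, hA, ih, pow_succ]; ring

lemma trace_conj (X Y A : M2) (hA : A.det = -1) (h : X * A = A * Y) :
    X.trace = Y.trace := by
  have h1 : X * (A * A.adjugate) = A * Y * A.adjugate := by rw [← mul_assoc, h]
  rw [Matrix.mul_adjugate, hA] at h1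
  have h2 : X.trace = -(A * Y * A.adjugate).trace := by
    rw [← h1]; simp
  rw [h2, Matrix.trace_mul_comm, ← mul_assoc, Matrix.adjugate_mul, hA]
  simp

lemma rat_of_rec (s : ℕ → ℤ) (t d : ℤ) (ℓ N : ℕ) (hℓ : 1 ≤ ℓ)
    (hrec : ∀ m, N ≤ m → s (m + (ℓ + ℓ)) = t * s (m + ℓ) - d * s m) :
    ∃ u v : Polynomial ℤ, v.coeff 0 = 1 ∧
      (v : PowerSeries ℤ) * PowerSeries.mk s = (u : PowerSeries ℤ) := by
  set v : Polynomial ℤ :=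
    1 - Polynomial.C t * Polynomial.X ^ ℓ + Polynomial.C d * Polynomial.X ^ (ℓ + ℓ) with hv
  have hℓ0 : ℓ ≠ 0 := by omega
  have hℓℓ0 : ℓ + ℓ ≠ 0 := by omega
  have hv0 : v.coeff 0 = 1 := by
    simp [hv, Polynomial.coeff_X_pow, hℓ0, hℓℓ0, Ne.symm hℓ0, Ne.symm hℓℓ0]
  have hcoe : (v : PowerSeries ℤ) =
      1 - PowerSeries.C t * PowerSeries.X ^ ℓ +
        PowerSeries.C d * PowerSeries.X ^ (ℓ + ℓ) := by
    rw [hv]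
    push_cast [Polynomial.coe_add, Polynomial.coe_sub, Polynomial.coe_mul, Polynomial.coe_pow,
      Polynomial.coe_X, Polynomial.coe_C, Polynomial.coe_one]
    rfl
  have key : ∀ m, PowerSeries.coeff (m + (ℓ + ℓ)) ((v : PowerSeries ℤ) * PowerSeries.mk s)
      = s (m + (ℓ + ℓ)) - t * s (m + ℓ) + d * s m := by
    intro m
    rw [hcoe, add_mul, sub_mul, one_mul, mul_assoc, mul_assoc]
    have h1 : m + (ℓ + ℓ) = (m + ℓ) + ℓ := by ring
    rw [map_add, map_sub, PowerSeries.coeff_C_mul, PowerSeries.coeff_C_mul,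
      PowerSeries.coeff_X_pow_mul, h1, PowerSeries.coeff_X_pow_mul]
    simp
  refine ⟨PowerSeries.trunc (N + (ℓ + ℓ)) ((v : PowerSeries ℤ) * PowerSeries.mk s), v, hv0, ?_⟩
  ext n
  rw [Polynomial.coeff_coe, PowerSeries.coeff_trunc]
  split
  · rfl
  · rename_i h
    push_neg at h
    obtain ⟨m, rfl⟩ : ∃ m, n = m + (ℓ + ℓ) := ⟨n - (ℓ + ℓ), by omega⟩
    rw [key]
    have := hrec m (by omega)
    linarith

/-- If the sequence of partial quotients `a` is eventually periodic
(period `ℓ ≥ 1`, pre-period `k`), then the generating functions of the convergent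
numerators `p` and denominators `q` are rational with integer coefficients. -/
theorem generating_functions_rational
    (a : ℕ → ℕ) (ha : ∀ j, 1 ≤ j → 1 ≤ a j)
    (p q : ℕ → ℤ)
    (hp0 : p 0 = 0) (hp1 : p 1 = 1)
    (hp : ∀ n, 2 ≤ n → p n = (a n : ℤ) * p (n - 1) + p (n - 2))
    (hq0 : q 0 = 1) (hq1 : q 1 = (a 1 : ℤ))
    (hq : ∀ n, 2 ≤ n → q n = (a n : ℤ) * q (n - 1) + q (n - 2))
    (ℓ k : ℕ) (hℓ : 1 ≤ ℓ)
    (hper : ∀ j, k < j → a (j + ℓ) = a j) :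
    (∃ u v : Polynomial ℤ, v.coeff 0 = 1 ∧
      (v : PowerSeries ℤ) * PowerSeries.mk (fun n => p n) = (u : PowerSeries ℤ)) ∧
    (∃ u' v' : Polynomial ℤ, v'.coeff 0 = 1 ∧
      (v' : PowerSeries ℤ) * PowerSeries.mk (fun n => q n) = (u' : PowerSeries ℤ)) := by
  set A : ℕ → M2 := fun n => !![(a n : ℤ), 1; 1, 0] with hA
  have hAdet : ∀ i, (A i).det = -1 := by
    intro i; simp [hA, Matrix.det_fin_two_of]
  have hAper : ∀ i, k < i → A (i + ℓ) = A i := by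
    intro i hi; simp [hA, hper i hi]
  set V : ℕ → M2 := fun n => !![p n, q n; p (n - 1), q (n - 1)] with hV
  have hVstep : ∀ n, 1 ≤ n → V (n + 1) = A (n + 1) * V n := by
    intro n hn
    ext i j
    fin_cases i <;> fin_cases j <;>
      simp [hV, hA, Matrix.mul_apply, Fin.sum_univ_two, hp (n + 1) (by omega),
        hq (n + 1) (by omega)]
  have hVP : ∀ n, 1 ≤ n → ∀ j, V (n + j) = Pprod A n j * V n := by
    intro n hn j
    induction j with
    | zero => simp [Pprod]
    | succ j ih =>
        have e : n + (j + 1) = (n + j) + 1 := by ring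
        rw [e, hVstep (n + j) (by omega), ih, Pprod, mul_assoc]
  set t : ℤ := (Pprod A (k + 1) ℓ).trace with ht
  have htr : ∀ n, k + 1 ≤ n → (Pprod A n ℓ).trace = t := by
    intro n hn
    induction n, hn using Nat.le_induction with
    | base => rfl
    | succ n hn ih =>
        rw [← ih]
        apply trace_conj _ _ (A (n + 1)) (hAdet _)
        rw [Pprod_comm, hAper (n + 1) (by omega)]
  have hkey : ∀ n, k + 1 ≤ n →
      V (n + (ℓ + ℓ)) = t • V (n + ℓ) - ((-1 : ℤ) ^ ℓ) • V n := by
    intro n hn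
    have e1 : n + (ℓ + ℓ) = (n + ℓ) + ℓ := by ring
    rw [e1, hVP (n + ℓ) (by omega) ℓ, Pprod_per A k ℓ hAper n (by omega) ℓ,
      hVP n (by omega) ℓ, ← mul_assoc, ch2, htr n (by omega),
      Pprod_det A hAdet n ℓ, sub_mul, smul_mul_assoc, smul_mul_assoc, one_mul]
  have entry : ∀ (i j : Fin 2) (s : ℕ → ℤ), (∀ m, (V m) i j = s m) →
      ∀ m, k + 1 ≤ m → s (m + (ℓ + ℓ)) = t * s (m + ℓ) - (-1 : ℤ) ^ ℓ * s m := by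
    intro i j s hs m hm
    have h := congrArg (fun X : M2 => X i j) (hkey m hm)
    simp only [Matrix.sub_apply, Matrix.smul_apply, smul_eq_mul] at h
    simpa [hs] using h
  constructor
  · exact rat_of_rec p t ((-1) ^ ℓ) ℓ (k + 1) hℓ
      (entry 0 0 p (fun m => by simp [hV]))
  · exact rat_of_rec q t ((-1) ^ ℓ) ℓ (k + 1) hℓ
      (entry 0 1 q (fun m => by simp [hV]))
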